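/- Let X ∈ F_q^{d×L} be a random matrix and Z a random variable on the same finite probability space, and let M₁ ∈ F_q^{d×μ₁}, M₂ ∈ F_q^{d×μ₂} be fixed matrices. Then H(Z, XᵀM₁) + H(Z, XᵀM₂) ≥ H(Z, Xᵀ[M₁ ∩ M₂]) + H(Z, Xᵀ[M₁, M₂]), where [M₁ ∩ M₂] is any matrix whose columns form a basis of the intersection of the column spans of M₁ and M₂, and [M₁, M₂] is the column-wise concatenation. -/

import Mathlib

open scoped BigOperators
open Matrix

/-- Probability that the random variable `X` takes the value `a`. -/
noncomputable def pOf {Ω α : Type*} [Fintype Ω] [DecidableEq α]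
    (p : Ω → ℝ) (X : Ω → α) (a : α) : ℝ :=
  ∑ ω ∈ Finset.univ.filter (fun ω => X ω = a), p ω

/-- Shannon entropy (natural units) of a finitely-valued random variable. -/
noncomputable def Hent {Ω α : Type*} [Fintype Ω] [Fintype α] [DecidableEq α]
    (p : Ω → ℝ) (X : Ω → α) : ℝ :=
  ∑ a : α, Real.negMulLog (pOf p X a)

section helpers

variable {Ω α β γ : Type*} [Fintype Ω] [DecidableEq α] [DecidableEq β] [DecidableEq γ]
variable (p : Ω → ℝ)

lemma pOf_eq_sum_ite (X : Ω → α) (a : α) :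
    pOf p X a = ∑ ω, if X ω = a then p ω else 0 := by
  rw [pOf, Finset.sum_filter]

lemma pOf_nonneg (hp0 : ∀ ω, 0 ≤ p ω) (X : Ω → α) (a : α) : 0 ≤ pOf p X a :=
  Finset.sum_nonneg fun ω _ => hp0 ω

lemma sum_pOf [Fintype α] (X : Ω → α) : ∑ a, pOf p X a = ∑ ω, p ω := by
  simp only [pOf_eq_sum_ite]
  rw [Finset.sum_comm]
  simp [Finset.sum_ite_eq]

lemma pOf_comp [Fintype α] (f : α → γ) (W : Ω → α) (c : γ) :
    pOf p (fun ω => f (W ω)) c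
      = ∑ a ∈ Finset.univ.filter (fun a => f a = c), pOf p W a := by
  simp only [pOf_eq_sum_ite, Finset.sum_filter]
  have h1 : ∀ a : α, (if f a = c then ∑ ω, if W ω = a then p ω else 0 else 0)
      = ∑ ω, if W ω = a ∧ f a = c then p ω else 0 := by
    intro a; split <;> simp_all
  rw [Finset.sum_congr rfl fun a _ => h1 a, Finset.sum_comm]
  refine Finset.sum_congr rfl fun ω _ => ?_
  simp only [ite_and]
  rw [Finset.sum_ite_eq]
  simp

lemma pOf_fst [Fintype β] (A : Ω → α) (B : Ω → β) (a : α) :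
    ∑ b, pOf p (fun ω => (A ω, B ω)) (a, b) = pOf p A a := by
  simp only [pOf_eq_sum_ite]
  rw [Finset.sum_comm]
  congr 1; ext ω
  simp [Prod.ext_iff, ite_and, Finset.sum_ite_eq]

lemma pOf_snd [Fintype α] (A : Ω → α) (B : Ω → β) (b : β) :
    ∑ a, pOf p (fun ω => (A ω, B ω)) (a, b) = pOf p B b := by
  simp only [pOf_eq_sum_ite]
  rw [Finset.sum_comm]
  congr 1; ext ω
  simp [Prod.ext_iff, ite_and, Finset.sum_ite_eq]

lemma Hent_comp_inj [Fintype α] [Fintype γ] (W : Ω → α) (θ : α → γ)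
    (hθ : Function.Injective θ) :
    Hent p (fun ω => θ (W ω)) = Hent p W := by
  unfold Hent
  have himg : ∑ c ∈ Finset.univ.image θ, Real.negMulLog (pOf p (fun ω => θ (W ω)) c)
      = ∑ a, Real.negMulLog (pOf p W a) := by
    rw [Finset.sum_image (fun x _ y _ h => hθ h)]
    refine Finset.sum_congr rfl fun a _ => ?_
    congr 1
    rw [pOf, pOf]
    congr 1
    ext ω
    simp [hθ.eq_iff]
  rw [← himg]
  refine (Finset.sum_subset (Finset.subset_univ _) fun c _ hc => ?_).symm
  have hz : pOf p (fun ω => θ (W ω)) c = 0 := by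
    rw [pOf]
    apply Finset.sum_eq_zero
    intro ω hω
    exfalso; apply hc
    simp only [Finset.mem_filter, Finset.mem_univ, true_and] at hω
    exact Finset.mem_image.mpr ⟨W ω, Finset.mem_univ _, hω⟩
  rw [hz, Real.negMulLog_zero]

end helpers

lemma key_submod {Ω α β γ : Type*} [Fintype Ω] [Fintype α] [Fintype β] [Fintype γ]
    [DecidableEq α] [DecidableEq β] [DecidableEq γ]
    (p : Ω → ℝ) (hp0 : ∀ ω, 0 ≤ p ω) (hp1 : ∑ ω, p ω = 1)
    (A : Ω → α) (B : Ω → β) (φ : α → γ) (ψ : β → γ)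
    (hφψ : ∀ ω, φ (A ω) = ψ (B ω)) :
    Hent p (fun ω => φ (A ω)) + Hent p (fun ω => (A ω, B ω))
      ≤ Hent p A + Hent p B := by
  classical
  set r : α × β → ℝ := pOf p (fun ω => (A ω, B ω)) with hr
  set u : α → ℝ := pOf p A with hu
  set v : β → ℝ := pOf p B with hv
  set s : γ → ℝ := pOf p (fun ω => φ (A ω)) with hs
  have hr0 : ∀ t, 0 ≤ r t := fun t => pOf_nonneg p hp0 _ t
  have hu0 : ∀ a, 0 ≤ u a := fun a => pOf_nonneg p hp0 _ a
  have hv0 : ∀ b, 0 ≤ v b := fun b => pOf_nonneg p hp0 _ b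
  have hs0 : ∀ c, 0 ≤ s c := fun c => pOf_nonneg p hp0 _ c
  have hmargA : ∀ a, ∑ b, r (a, b) = u a := fun a => pOf_fst p A B a
  have hmargB : ∀ b, ∑ a, r (a, b) = v b := fun b => pOf_snd p A B b
  have hsum_r : ∑ t : α × β, r t = 1 := by rw [hr, sum_pOf, hp1]
  have hsum_u : ∑ a, u a = 1 := by rw [hu, sum_pOf, hp1]
  have hsφ : ∀ c, s c = ∑ a ∈ Finset.univ.filter (fun a => φ a = c), u a :=
    fun c => pOf_comp p φ A c
  have hsψ : ∀ c, s c = ∑ b ∈ Finset.univ.filter (fun b => ψ b = c), v b := by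
    intro c
    have : (fun ω => φ (A ω)) = fun ω => ψ (B ω) := funext hφψ
    rw [hs, this, pOf_comp]
  -- r ≤ marginals
  have hrleu : ∀ t : α × β, r t ≤ u t.1 := by
    intro t
    rw [← hmargA t.1]
    exact Finset.single_le_sum (fun b _ => hr0 (t.1, b)) (Finset.mem_univ t.2)
  have hrlev : ∀ t : α × β, r t ≤ v t.2 := by
    intro t
    rw [← hmargB t.2]
    exact Finset.single_le_sum (fun a _ => hr0 (a, t.2)) (Finset.mem_univ t.1)
  have hules : ∀ a, u a ≤ s (φ a) := by
    intro a
    rw [hsφ (φ a)]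
    exact Finset.single_le_sum (fun x _ => hu0 x)
      (Finset.mem_filter.mpr ⟨Finset.mem_univ a, rfl⟩)
  -- support facts
  have hsupp : ∀ t : α × β, 0 < r t → φ t.1 = ψ t.2 := by
    intro t ht
    have hne : r t ≠ 0 := ne_of_gt ht
    rw [hr, pOf] at hne
    obtain ⟨ω, hω, -⟩ := Finset.exists_ne_zero_of_sum_ne_zero hne
    simp only [Finset.mem_filter, Finset.mem_univ, true_and, Prod.ext_iff] at hω
    rw [← hω.1, ← hω.2]
    exact hφψ ω
  -- rewrite the four entropies as sums over pairs
  have E1 : Hent p A = ∑ t : α × β, (-(r t * Real.log (u t.1))) := by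
    rw [Hent, Fintype.sum_prod_type]
    refine Finset.sum_congr rfl fun a _ => ?_
    have : ∑ y : β, -(r (a, y) * Real.log (u a))
        = Real.negMulLog (pOf p A a) := by
      rw [Finset.sum_neg_distrib, ← Finset.sum_mul, hmargA a, Real.negMulLog, neg_mul]
    exact this.symm
  have E2 : Hent p B = ∑ t : α × β, (-(r t * Real.log (v t.2))) := by
    rw [Hent, Fintype.sum_prod_type_right]
    refine Finset.sum_congr rfl fun b _ => ?_
    have : ∑ x : α, -(r (x, b) * Real.log (v b))
        = Real.negMulLog (pOf p B b) := by
      rw [Finset.sum_neg_distrib, ← Finset.sum_mul, hmargB b, Real.negMulLog, neg_mul]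
    exact this.symm
  have E3 : Hent p (fun ω => φ (A ω)) = ∑ t : α × β, (-(r t * Real.log (s (φ t.1)))) := by
    have step1 : ∑ t : α × β, (-(r t * Real.log (s (φ t.1))))
        = ∑ a, (-(u a * Real.log (s (φ a)))) := by
      rw [Fintype.sum_prod_type]
      refine Finset.sum_congr rfl fun a _ => ?_
      have : ∑ y : β, -(r (a, y) * Real.log (s (φ a)))
          = -(u a * Real.log (s (φ a))) := by
        rw [Finset.sum_neg_distrib, ← Finset.sum_mul, hmargA a]
      exact this
    rw [step1, Hent]
    rw [← Finset.sum_fiberwise_of_maps_to (g := φ) (fun a _ => Finset.mem_univ (φ a))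
      (fun a => -(u a * Real.log (s (φ a))))]
    refine Finset.sum_congr rfl fun c _ => ?_
    have : ∀ a ∈ Finset.univ.filter (fun a => φ a = c),
        -(u a * Real.log (s (φ a))) = -(u a * Real.log (s c)) := by
      intro a ha
      rw [(Finset.mem_filter.mp ha).2]
    rw [Finset.sum_congr rfl this, Finset.sum_neg_distrib, ← Finset.sum_mul,
      ← hsφ c, Real.negMulLog, neg_mul]
  have E4 : Hent p (fun ω => (A ω, B ω)) = ∑ t : α × β, Real.negMulLog (r t) := rfl
  rw [E1, E2, E3, E4]
  -- define comparison distribution q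
  set q : α × β → ℝ := fun t =>
    if φ t.1 = ψ t.2 then u t.1 * v t.2 / s (φ t.1) else 0 with hq
  have hq0 : ∀ t, 0 ≤ q t := by
    intro t
    rw [hq]
    dsimp only
    split
    · exact div_nonneg (mul_nonneg (hu0 _) (hv0 _)) (hs0 _)
    · exact le_refl 0
  -- total mass of q is at most 1
  have hqsum : ∑ t : α × β, q t ≤ 1 := by
    rw [Fintype.sum_prod_type]
    have hin : ∀ a, ∑ b, q (a, b) ≤ u a := by
      intro a
      have hterm : ∀ b, q (a, b)
          = (u a / s (φ a)) * (if ψ b = φ a then v b else 0) := by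
        intro b
        rw [hq]
        dsimp only
        by_cases h : φ a = ψ b
        · rw [if_pos h, if_pos h.symm]; ring
        · rw [if_neg h, if_neg (fun hh => h hh.symm), mul_zero]
      rw [Finset.sum_congr rfl fun b _ => hterm b, ← Finset.mul_sum,
        ← Finset.sum_filter, ← hsψ (φ a)]
      by_cases hz : s (φ a) = 0
      · have hu_z : u a = 0 := le_antisymm (hz ▸ hules a) (hu0 a)
        rw [hz, hu_z]
        simp
      · rw [div_mul_cancel₀ _ hz]
    calc ∑ a, ∑ b, q (a, b) ≤ ∑ a, u a := Finset.sum_le_sum fun a _ => hin a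
      _ = 1 := hsum_u
  -- pointwise Gibbs bound
  have hD : ∀ t : α × β, r t - q t
      ≤ r t * (Real.log (s (φ t.1)) + Real.log (r t)
        - Real.log (u t.1) - Real.log (v t.2)) := by
    intro t
    rcases eq_or_lt_of_le (hr0 t) with h0 | hpos
    · rw [← h0, zero_mul, zero_sub]
      linarith [hq0 t]
    · have hut : 0 < u t.1 := lt_of_lt_of_le hpos (hrleu t)
      have hvt : 0 < v t.2 := lt_of_lt_of_le hpos (hrlev t)
      have hst : 0 < s (φ t.1) := lt_of_lt_of_le hut (hules t.1)
      have hceq : φ t.1 = ψ t.2 := hsupp t hpos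
      have hqt : q t = u t.1 * v t.2 / s (φ t.1) := by
        rw [hq]; dsimp only; rw [if_pos hceq]
      have hqpos : 0 < q t := hqt ▸ div_pos (mul_pos hut hvt) hst
      have hlog : Real.log (q t / r t) ≤ q t / r t - 1 :=
        Real.log_le_sub_one_of_pos (div_pos hqpos hpos)
      have hlq : Real.log (q t)
          = Real.log (u t.1) + Real.log (v t.2) - Real.log (s (φ t.1)) := by
        rw [hqt, Real.log_div (by positivity) (ne_of_gt hst),
          Real.log_mul (ne_of_gt hut) (ne_of_gt hvt)]
      have hlqr : Real.log (q t / r t) = Real.log (q t) - Real.log (r t) :=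
        Real.log_div (ne_of_gt hqpos) (ne_of_gt hpos)
      have hmul := mul_le_mul_of_nonneg_left hlog (le_of_lt hpos)
      rw [hlqr, hlq] at hmul
      have hrr : r t * (q t / r t - 1) = q t - r t := by field_simp
      rw [hrr] at hmul
      have hre : r t * (Real.log (s (φ t.1)) + Real.log (r t)
            - Real.log (u t.1) - Real.log (v t.2))
          = -(r t * (Real.log (u t.1) + Real.log (v t.2) - Real.log (s (φ t.1))
            - Real.log (r t))) := by ring
      rw [hre]
      linarith
  -- sum up
  have hDsum : 0 ≤ ∑ t : α × β, r t * (Real.log (s (φ t.1)) + Real.log (r t)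
      - Real.log (u t.1) - Real.log (v t.2)) := by
    have h1 : ∑ t : α × β, (r t - q t)
        ≤ ∑ t : α × β, r t * (Real.log (s (φ t.1)) + Real.log (r t)
          - Real.log (u t.1) - Real.log (v t.2)) :=
      Finset.sum_le_sum fun t _ => hD t
    have h2 : ∑ t : α × β, (r t - q t) = 1 - ∑ t : α × β, q t := by
      rw [Finset.sum_sub_distrib, hsum_r]
    linarith
  have hsplit : ∑ t : α × β, r t * (Real.log (s (φ t.1)) + Real.log (r t)
        - Real.log (u t.1) - Real.log (v t.2))
      = ((∑ t : α × β, (-(r t * Real.log (u t.1))))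
          + (∑ t : α × β, (-(r t * Real.log (v t.2)))))
        - ((∑ t : α × β, (-(r t * Real.log (s (φ t.1)))))
          + (∑ t : α × β, Real.negMulLog (r t))) := by
    rw [← Finset.sum_add_distrib, ← Finset.sum_add_distrib, ← Finset.sum_sub_distrib]
    refine Finset.sum_congr rfl fun t _ => ?_
    rw [Real.negMulLog]
    ring
  linarith


/-- Corollary of functional submodularity for linear projections.
For a random matrix `X`, random variable `Z`, fixed matrices `M₁`, `M₂`, and any matrix
`N` whose columns form a basis of the intersection of the column spans of `M₁` and `M₂`,
`H(Z, XᵀM₁) + H(Z, XᵀM₂) ≥ H(Z, XᵀN) + H(Z, Xᵀ[M₁, M₂])`. -/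
theorem functional_submodularity_linear
    {F : Type*} [Field F] [Fintype F] [DecidableEq F]
    {Ω ζ : Type*} [Fintype Ω] [Fintype ζ] [DecidableEq ζ]
    {d L μ₁ μ₂ μ₀ : ℕ}
    (p : Ω → ℝ) (hp0 : ∀ ω, 0 ≤ p ω) (hp1 : ∑ ω, p ω = 1)
    (X : Ω → Matrix (Fin d) (Fin L) F) (Z : Ω → ζ)
    (M₁ : Matrix (Fin d) (Fin μ₁) F) (M₂ : Matrix (Fin d) (Fin μ₂) F)
    (N : Matrix (Fin d) (Fin μ₀) F)
    (hNbasis : N.rank = μ₀)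
    (hNspan : LinearMap.range N.mulVecLin
      = LinearMap.range M₁.mulVecLin ⊓ LinearMap.range M₂.mulVecLin) :
    Hent p (fun ω => (Z ω, (X ω)ᵀ * N))
      + Hent p (fun ω => (Z ω, (X ω)ᵀ * Matrix.fromCols M₁ M₂))
    ≤ Hent p (fun ω => (Z ω, (X ω)ᵀ * M₁))
      + Hent p (fun ω => (Z ω, (X ω)ᵀ * M₂)) := by
  classical
  -- columns of N lie in the column span of M₁ and of M₂
  have hcol : ∀ j : Fin μ₀,
      N.mulVecLin (Pi.single j 1) ∈ LinearMap.range N.mulVecLin :=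
    fun j => LinearMap.mem_range_self _ _
  have hcolval : ∀ j : Fin μ₀, N.mulVecLin (Pi.single j 1) = fun i => N i j := by
    intro j
    rw [Matrix.mulVecLin_apply, Matrix.mulVec_single_one]
    rfl
  have hP : ∃ P : Matrix (Fin μ₁) (Fin μ₀) F, M₁ * P = N := by
    have h1 : ∀ j : Fin μ₀, ∃ w, M₁.mulVec w = fun i => N i j := by
      intro j
      have := hcol j
      rw [hNspan] at this
      obtain ⟨w, hw⟩ := this.1
      exact ⟨w, by rw [← Matrix.mulVecLin_apply, hw, hcolval j]⟩
    choose W1 hW1 using h1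
    refine ⟨Matrix.of fun k j => W1 j k, ?_⟩
    ext i j
    have := congrFun (hW1 j) i
    rw [Matrix.mulVec, dotProduct] at this
    rw [Matrix.mul_apply]
    exact this
  have hQ : ∃ Q : Matrix (Fin μ₂) (Fin μ₀) F, M₂ * Q = N := by
    have h1 : ∀ j : Fin μ₀, ∃ w, M₂.mulVec w = fun i => N i j := by
      intro j
      have := hcol j
      rw [hNspan] at this
      obtain ⟨w, hw⟩ := this.2
      exact ⟨w, by rw [← Matrix.mulVecLin_apply, hw, hcolval j]⟩
    choose W2 hW2 using h1
    refine ⟨Matrix.of fun k j => W2 j k, ?_⟩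
    ext i j
    have := congrFun (hW2 j) i
    rw [Matrix.mulVec, dotProduct] at this
    rw [Matrix.mul_apply]
    exact this
  obtain ⟨P, hPe⟩ := hP
  obtain ⟨Q, hQe⟩ := hQ
  set A : Ω → ζ × Matrix (Fin L) (Fin μ₁) F := fun ω => (Z ω, (X ω)ᵀ * M₁) with hA
  set B : Ω → ζ × Matrix (Fin L) (Fin μ₂) F := fun ω => (Z ω, (X ω)ᵀ * M₂) with hB
  set φ : ζ × Matrix (Fin L) (Fin μ₁) F → ζ × Matrix (Fin L) (Fin μ₀) F :=
    fun t => (t.1, t.2 * P) with hφ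
  set ψ : ζ × Matrix (Fin L) (Fin μ₂) F → ζ × Matrix (Fin L) (Fin μ₀) F :=
    fun t => (t.1, t.2 * Q) with hψ
  have hφA : ∀ ω, φ (A ω) = (Z ω, (X ω)ᵀ * N) := by
    intro ω
    rw [hφ, hA]
    dsimp only
    rw [Matrix.mul_assoc, hPe]
  have hψB : ∀ ω, ψ (B ω) = (Z ω, (X ω)ᵀ * N) := by
    intro ω
    rw [hψ, hB]
    dsimp only
    rw [Matrix.mul_assoc, hQe]
  have hφψ : ∀ ω, φ (A ω) = ψ (B ω) := fun ω => (hφA ω).trans (hψB ω).symm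
  have hkey := key_submod p hp0 hp1 A B φ ψ hφψ
  have hCeq : Hent p (fun ω => φ (A ω)) = Hent p (fun ω => (Z ω, (X ω)ᵀ * N)) := by
    congr 1
    exact funext hφA
  -- identify the pair (A,B) with the concatenated matrix
  set θ : ζ × Matrix (Fin L) (Fin μ₁ ⊕ Fin μ₂) F →
      (ζ × Matrix (Fin L) (Fin μ₁) F) × (ζ × Matrix (Fin L) (Fin μ₂) F) :=
    fun t => ((t.1, t.2.toCols₁), (t.1, t.2.toCols₂)) with hθ
  have hθinj : Function.Injective θ := by
    intro x y h
    simp only [hθ, Prod.mk.injEq] at h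
    have h2 : x.2 = y.2 := by
      rw [← Matrix.fromCols_toCols x.2, ← Matrix.fromCols_toCols y.2,
        h.1.2, h.2.2]
    exact Prod.ext h.1.1 h2
  have hθD : ∀ ω, θ (Z ω, (X ω)ᵀ * Matrix.fromCols M₁ M₂) = (A ω, B ω) := by
    intro ω
    rw [hθ, hA, hB]
    dsimp only
    rw [Matrix.mul_fromCols, Matrix.toCols₁_fromCols,
      Matrix.toCols₂_fromCols]
  have hDeq : Hent p (fun ω => (A ω, B ω))
      = Hent p (fun ω => (Z ω, (X ω)ᵀ * Matrix.fromCols M₁ M₂)) := by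
    rw [← Hent_comp_inj p (fun ω => (Z ω, (X ω)ᵀ * Matrix.fromCols M₁ M₂)) θ hθinj]
    congr 1
  rw [hCeq, hDeq] at hkey
  exact hkey
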